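/- Let K be a field of characteristic ≠ 2 and F/K a quadratic extension, F = K[ξ] with ξ^2 = −pξ − q. Define n: F^× × F^× → Λ^2_Q(K^× ⊗ Q) by: n(a,b) = 2(a ∧ b) if a,b ∈ K^×; n(a,b) = a ∧ N(b) if a ∈ K^×, b ∉ K; n(a,b) = N(a) ∧ b if b ∈ K^×, a ∉ K; n(a,b) = (a/b) ∧ N(b) if a,b ∉ K and a/b ∈ K; and n(a,b) = 2(a1 ∧ b1) − (N(a)/a1^2) ∧ (b0 − b1 a0/a1) − (a0 − a1 b0/b1) ∧ (N(b)/b1^2) otherwise. Then n is antisymmetric: n(a,b) = −n(b,a) for all a, b ∈ F^×. -/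

import Mathlib

set_option synthInstance.maxHeartbeats 400000
set_option maxHeartbeats 1000000

open scoped TensorProduct Classical
open Polynomial

/-- `K^× ⊗_ℤ ℚ` as a `ℚ`-vector space. -/
noncomputable abbrev MUQ (F : Type*) [Field F] := ℚ ⊗[ℤ] Additive Fˣ

/-- The image of a nonzero `f ∈ F^×` in `F^× ⊗ ℚ`, inside the exterior algebra. -/
noncomputable def wE {F : Type*} [Field F] (f : F) : ExteriorAlgebra ℚ (MUQ F) :=
  if h : f ≠ 0 then ExteriorAlgebra.ι ℚ ((1 : ℚ) ⊗ₜ[ℤ] Additive.ofMul (Units.mk0 f h)) else 0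

/-- The wedge `f ∧ g ∈ Λ²_ℚ(F^× ⊗ ℚ)`. -/
noncomputable def wedge {F : Type*} [Field F] (f g : F) : ExteriorAlgebra ℚ (MUQ F) :=
  wE f * wE g

/-- The norm form of the quadratic extension `F = K[ξ]`, `ξ² = −pξ − q`:
`N(x0 + x1 ξ) = x0² − p x0 x1 + q x1²`. -/
def Nrm {K : Type*} [Field K] (p q x0 x1 : K) : K := x0 ^ 2 - p * x0 * x1 + q * x1 ^ 2

/-- The case-by-case map `n = n_{F/K,2}[2] : F^× × F^× → Λ²_ℚ(K^× ⊗ ℚ)` of the paper,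
with an element `a ∈ F` written in components `a = a0 + a1 ξ`; `a ∈ K` iff `a1 = 0`. -/
noncomputable def nmap {K : Type*} [Field K] (p q a0 a1 b0 b1 : K) :
    ExteriorAlgebra ℚ (MUQ K) :=
  if a1 = 0 ∧ b1 = 0 then (2 : ℚ) • wedge a0 b0
  else if a1 = 0 then wedge a0 (Nrm p q b0 b1)
  else if b1 = 0 then wedge (Nrm p q a0 a1) b0
  else if a0 * b1 = a1 * b0 then wedge (a1 / b1) (Nrm p q b0 b1)
  else (2 : ℚ) • wedge a1 b1
    - wedge (Nrm p q a0 a1 / a1 ^ 2) (b0 - b1 * a0 / a1)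
    - wedge (a0 - a1 * b0 / b1) (Nrm p q b0 b1 / b1 ^ 2)

lemma wedge_anticomm {F : Type*} [Field F] (f g : F) : wedge f g = -wedge g f := by
  unfold wedge wE
  by_cases hf : f ≠ 0 <;> by_cases hg : g ≠ 0 <;> simp [hf, hg]
  have := ExteriorAlgebra.ι_add_mul_swap (R := ℚ)
    ((1 : ℚ) ⊗ₜ[ℤ] Additive.ofMul (Units.mk0 f hf))
    ((1 : ℚ) ⊗ₜ[ℤ] Additive.ofMul (Units.mk0 g hg))
  exact eq_neg_of_add_eq_zero_left this

lemma wE_sq {F : Type*} [Field F] (f : F) : wE f * wE f = 0 := by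
  unfold wE
  by_cases hf : f ≠ 0 <;> simp [hf, ExteriorAlgebra.ι_sq_zero]

lemma wE_mul {F : Type*} [Field F] {f g : F} (hf : f ≠ 0) (hg : g ≠ 0) :
    wE (f * g) = wE f + wE g := by
  unfold wE
  rw [dif_pos (mul_ne_zero hf hg), dif_pos hf, dif_pos hg]
  rw [show Units.mk0 (f * g) (mul_ne_zero hf hg) = Units.mk0 f hf * Units.mk0 g hg from
    Units.mk0_mul f g _]
  rw [show Additive.ofMul (Units.mk0 f hf * Units.mk0 g hg)
      = Additive.ofMul (Units.mk0 f hf) + Additive.ofMul (Units.mk0 g hg) from rfl]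
  rw [TensorProduct.tmul_add, map_add]

lemma wE_one {F : Type*} [Field F] : wE (1 : F) = 0 := by
  unfold wE
  simp [show Units.mk0 (1 : F) one_ne_zero = 1 from by ext; rfl]

lemma wE_inv {F : Type*} [Field F] {f : F} (hf : f ≠ 0) : wE f⁻¹ = -wE f := by
  have h := wE_mul hf (inv_ne_zero hf)
  rw [mul_inv_cancel₀ hf, wE_one] at h
  exact eq_neg_of_add_eq_zero_right h.symm

lemma nrm_ne_zero {K : Type*} [Field K] {p q : K}
    (hirr : Irreducible (X ^ 2 + C p * X + C q : K[X])) {b0 b1 : K}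
    (hb : ¬(b0 = 0 ∧ b1 = 0)) : Nrm p q b0 b1 ≠ 0 := by
  intro h
  by_cases hb1 : b1 = 0
  · have hb0 : b0 ≠ 0 := fun h0 => hb ⟨h0, hb1⟩
    simp [Nrm, hb1] at h
    exact hb0 h
  · set x : K := -b0 / b1 with hx
    have hroot : (X ^ 2 + C p * X + C q : K[X]).IsRoot x := by
      have e : x ^ 2 + p * x + q = Nrm p q b0 b1 / b1 ^ 2 := by
        rw [hx]; unfold Nrm; field_simp; ring
      simp only [IsRoot, eval_add, eval_mul, eval_pow, eval_X, eval_C]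
      rw [e, h, zero_div]
    obtain ⟨s, hs⟩ := Polynomial.dvd_iff_isRoot.mpr hroot
    have hdeg : (X ^ 2 + C p * X + C q : K[X]).natDegree = 2 := by
      compute_degree!
    rcases hirr.isUnit_or_isUnit hs with hu | hu
    · have := Polynomial.natDegree_eq_zero_of_isUnit hu
      simp [Polynomial.natDegree_X_sub_C] at this
    · have hs0 : s ≠ 0 := by
        intro h0
        rw [h0, mul_zero] at hs
        exact hirr.ne_zero hs
      have := Polynomial.natDegree_eq_zero_of_isUnit hu
      rw [hs, Polynomial.natDegree_mul (Polynomial.X_sub_C_ne_zero x) hs0,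
        Polynomial.natDegree_X_sub_C, this] at hdeg
      norm_num at hdeg

/-- `char K ≠ 2`, `F = K[ξ]` a quadratic extension with `ξ² = −pξ − q`.
The case-defined map `n : F^× × F^× → Λ²_ℚ(K^× ⊗ ℚ)` is antisymmetric:
`n(a,b) = −n(b,a)` for all `a, b ∈ F^×`. -/
theorem stmt11 (K : Type*) [Field K] (hchar : (2 : K) ≠ 0) (p q : K)
    (hirr : Irreducible (X ^ 2 + C p * X + C q : K[X]))
    (a0 a1 b0 b1 : K) (ha : ¬(a0 = 0 ∧ a1 = 0)) (hb : ¬(b0 = 0 ∧ b1 = 0)) :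
    nmap p q a0 a1 b0 b1 = -nmap p q b0 b1 a0 a1 := by
  unfold nmap
  by_cases ha1 : a1 = 0 <;> by_cases hb1 : b1 = 0
  · rw [if_pos ⟨ha1, hb1⟩, if_pos ⟨hb1, ha1⟩, wedge_anticomm b0 a0, smul_neg, neg_neg]
  · rw [if_neg (by tauto), if_pos ha1, if_neg (by tauto), if_neg hb1, if_pos ha1]
    exact wedge_anticomm _ _
  · rw [if_neg (by tauto), if_neg ha1, if_pos hb1, if_neg (by tauto), if_pos hb1]
    exact wedge_anticomm _ _
  · simp only [if_neg (by tauto : ¬(a1 = 0 ∧ b1 = 0)), if_neg (by tauto : ¬(b1 = 0 ∧ a1 = 0)),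
      if_neg ha1, if_neg hb1]
    by_cases hprop : a0 * b1 = a1 * b0
    · rw [if_pos hprop, if_pos (by linear_combination -hprop)]
      have hNb := nrm_ne_zero hirr hb
      have hc : a1 / b1 ≠ 0 := div_ne_zero ha1 hb1
      have hNa : Nrm p q a0 a1 = (a1 / b1) ^ 2 * Nrm p q b0 b1 := by
        have ha0 : a0 = a1 / b1 * b0 := by field_simp; linear_combination hprop
        rw [ha0]; unfold Nrm; field_simp
      unfold wedge
      rw [hNa, show ((a1/b1)^2 : K) = (a1/b1) * (a1/b1) by ring,
        wE_mul (mul_ne_zero hc hc) hNb, wE_mul hc hc,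
        show (b1 / a1 : K) = (a1 / b1)⁻¹ by rw [inv_div], wE_inv hc]
      rw [neg_mul, mul_add, mul_add, wE_sq]
      abel
    · rw [if_neg hprop, if_neg (fun h => hprop (by linear_combination -h))]
      rw [wedge_anticomm b1 a1,
        wedge_anticomm (Nrm p q b0 b1 / b1 ^ 2) (a0 - a1 * b0 / b1),
        wedge_anticomm (b0 - b1 * a0 / a1) (Nrm p q a0 a1 / a1 ^ 2)]
      module
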